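/- If v is a standard complex Gaussian random vector in ℂ^n, then E(‖v‖² log‖v‖) = n·ψ(n+1)/2, where ψ is the digamma function. -/

import Mathlib

open MeasureTheory

noncomputable def digamma (x : ℝ) : ℝ := deriv Real.Gamma x / Real.Gamma x

/-- The standard complex Gaussian measure on ℂ: real and imaginary parts
independent centered Gaussians of variance 1/2; density `(1/π) exp(-|z|²)`. -/
noncomputable def stdCGaussian : Measure ℂ :=
  volume.withDensity fun z => ENNReal.ofReal ((1 / Real.pi) * Real.exp (-(‖z‖ ^ 2)))

/-- Standard complex Gaussian vector in ℂ^n (i.i.d. coordinates). -/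
noncomputable def stdCGaussianVec (n : ℕ) : Measure (Fin n → ℂ) :=
  Measure.pi fun _ => stdCGaussian

/-- r×r random complex matrix with i.i.d. standard complex Gaussian entries. -/
noncomputable def stdCGaussianMat (r : ℕ) : Measure (Fin r → Fin r → ℂ) :=
  Measure.pi fun _ => Measure.pi fun _ => stdCGaussian

open scoped ENNReal NNReal
open Set

namespace ExpSqNormAux

/-- The one-dimensional density. -/
noncomputable def d (z : ℂ) : ℝ := (1 / Real.pi) * Real.exp (-(‖z‖ ^ 2))

lemma d_nonneg (z : ℂ) : 0 ≤ d z := by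
  have := Real.pi_pos
  unfold d
  positivity

lemma measurable_d : Measurable d :=
  measurable_const.mul
    (Real.measurable_exp.comp ((continuous_norm.measurable.pow_const 2).neg))

instance : SigmaFinite stdCGaussian := by
  unfold stdCGaussian; infer_instance

lemma lintegral_pi_prod : ∀ (n : ℕ) (g : Fin n → ℂ → ℝ≥0∞), (∀ j, Measurable (g j)) →
    ∫⁻ x, ∏ j, g j (x j) ∂(Measure.pi fun _ : Fin n => (volume : Measure ℂ))
      = ∏ j, ∫⁻ z, g j z := by
  intro n
  induction n with
  | zero =>
      intro g _
      simp [lintegral_const]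
  | succ n ih =>
      intro g hg
      have mp := measurePreserving_piFinSuccAbove (fun _ : Fin (n + 1) => (volume : Measure ℂ)) 0
      have hmeas : Measurable fun y : ℂ × (Fin n → ℂ) =>
          g 0 y.1 * ∏ j, g (Fin.succAbove 0 j) (y.2 j) := by
        refine ((hg 0).comp measurable_fst).mul ?_
        exact Finset.measurable_prod _ fun j _ =>
          (hg _).comp ((measurable_pi_apply j).comp measurable_snd)
      calc ∫⁻ x, ∏ j, g j (x j) ∂(Measure.pi fun _ : Fin (n + 1) => (volume : Measure ℂ))
          = ∫⁻ y, g 0 y.1 * ∏ j, g (Fin.succAbove 0 j) (y.2 j)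
              ∂((volume : Measure ℂ).prod (Measure.pi fun _ : Fin n => (volume : Measure ℂ))) := by
            rw [← mp.lintegral_comp hmeas]
            refine lintegral_congr fun x => ?_
            rw [Fin.prod_univ_succAbove (fun j => g j (x j)) 0]
            rfl
        _ = (∫⁻ z, g 0 z) *
              ∫⁻ w, ∏ j, g (Fin.succAbove 0 j) (w j)
                ∂(Measure.pi fun _ : Fin n => (volume : Measure ℂ)) :=
            lintegral_prod_mul (hg 0).aemeasurable
              (Finset.measurable_prod _ fun j _ =>
                (hg _).comp (measurable_pi_apply j)).aemeasurable
        _ = (∫⁻ z, g 0 z) * ∏ j, ∫⁻ z, g (Fin.succAbove 0 j) z := by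
            rw [ih _ fun j => hg _]
        _ = ∏ j, ∫⁻ z, g j (z) := (Fin.prod_univ_succAbove (fun j => ∫⁻ z, g j z) 0).symm

lemma stdCGaussianVec_eq (n : ℕ) :
    stdCGaussianVec n = volume.withDensity fun v : Fin n → ℂ =>
      ENNReal.ofReal (Real.pi⁻¹ ^ n * Real.exp (-(∑ j, ‖v j‖ ^ 2))) := by
  have hπ := Real.pi_pos
  have hd : ∀ v : Fin n → ℂ,
      ENNReal.ofReal (Real.pi⁻¹ ^ n * Real.exp (-(∑ j, ‖v j‖ ^ 2)))
        = ∏ j, ENNReal.ofReal (d (v j)) := by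
    intro v
    rw [← ENNReal.ofReal_prod_of_nonneg (fun j _ => d_nonneg _)]
    congr 1
    unfold d
    rw [Finset.prod_mul_distrib, Finset.prod_const, ← Real.exp_sum, Finset.card_univ,
      Fintype.card_fin, one_div]
    congr 1
    rw [← Finset.sum_neg_distrib]
  unfold stdCGaussianVec
  refine Measure.pi_eq fun s hs => ?_
  rw [withDensity_apply _ (MeasurableSet.univ_pi hs), ← lintegral_indicator
    (MeasurableSet.univ_pi hs)]
  have hind : ∀ v : Fin n → ℂ,
      (Set.univ.pi s).indicator
        (fun v : Fin n → ℂ =>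
          ENNReal.ofReal (Real.pi⁻¹ ^ n * Real.exp (-(∑ j, ‖v j‖ ^ 2)))) v
        = ∏ j, (s j).indicator (fun z => ENNReal.ofReal (d z)) (v j) := by
    intro v
    by_cases hv : v ∈ Set.univ.pi s
    · rw [Set.indicator_of_mem hv, hd]
      exact Finset.prod_congr rfl fun j _ =>
        (Set.indicator_of_mem (hv j trivial) fun z => ENNReal.ofReal (d z)).symm
    · rw [Set.indicator_of_notMem hv]
      rw [Set.mem_univ_pi] at hv
      push_neg at hv
      obtain ⟨j, hj⟩ := hv
      exact (Finset.prod_eq_zero (Finset.mem_univ j)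
        (Set.indicator_of_notMem hj _)).symm
  rw [lintegral_congr hind, volume_pi, lintegral_pi_prod n _
    (fun j => measurable_d.ennreal_ofReal.indicator (hs j))]
  refine Finset.prod_congr rfl fun j _ => ?_
  rw [lintegral_indicator (hs j)]
  unfold stdCGaussian
  rw [withDensity_apply _ (hs j)]
  rfl

lemma hasDerivAt_Gamma_real {x : ℝ} (hx : 0 < x) :
    HasDerivAt Real.Gamma
      (∫ t in Ioi (0 : ℝ), t ^ (x - 1) * (Real.log t * Real.exp (-t))) x := by
  have h1 : HasDerivAt Complex.GammaIntegral
      (∫ t : ℝ in Ioi 0, (t : ℂ) ^ ((x : ℂ) - 1) * (Real.log t * Real.exp (-t))) x :=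
    Complex.hasDerivAt_GammaIntegral (by simpa using hx)
  have heq : Complex.Gamma =ᶠ[nhds (x : ℂ)] Complex.GammaIntegral := by
    have hopen : IsOpen {z : ℂ | 0 < z.re} := isOpen_lt continuous_const Complex.continuous_re
    filter_upwards [hopen.mem_nhds (by simpa using hx)] with z hz
    exact Complex.Gamma_eq_integral hz
  have h2 : HasDerivAt Complex.Gamma
      (∫ t : ℝ in Ioi 0, (t : ℂ) ^ ((x : ℂ) - 1) * (Real.log t * Real.exp (-t))) x :=
    h1.congr_of_eventuallyEq heq
  have h4 : (∫ t : ℝ in Ioi 0, (t : ℂ) ^ ((x : ℂ) - 1) * (Real.log t * Real.exp (-t)))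
      = ((∫ t in Ioi (0 : ℝ), t ^ (x - 1) * (Real.log t * Real.exp (-t)) : ℝ) : ℂ) := by
    rw [show (∫ t : ℝ in Ioi 0, (t : ℂ) ^ ((x : ℂ) - 1) * (Real.log t * Real.exp (-t)))
        = ∫ t : ℝ in Ioi 0, ((t ^ (x - 1) * (Real.log t * Real.exp (-t)) : ℝ) : ℂ) from
      setIntegral_congr_fun measurableSet_Ioi fun t ht => by
        rw [Complex.ofReal_mul, Complex.ofReal_mul, Complex.ofReal_cpow (le_of_lt ht)]
        push_cast
        ring]
    exact integral_ofReal
  have h3 := h2.real_of_complex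
  rw [h4] at h3
  rw [Complex.ofReal_re] at h3
  exact h3

/-- The measure-preserving identification of `ℝ^{n+n}` with `ℂ^n`. -/
noncomputable def Phi (n : ℕ) : EuclideanSpace ℝ (Fin n ⊕ Fin n) ≃ᵐ (Fin n → ℂ) :=
  (MeasurableEquiv.toLp 2 ((Fin n ⊕ Fin n) → ℝ)).symm.trans <|
    (MeasurableEquiv.sumPiEquivProdPi (fun _ => ℝ)).trans <|
      ((MeasurableEquiv.arrowProdEquivProdArrow ℝ ℝ (Fin n)).symm).trans <|
        MeasurableEquiv.piCongrRight fun _ => Complex.measurableEquivRealProd.symm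

lemma Phi_apply (n : ℕ) (x : EuclideanSpace ℝ (Fin n ⊕ Fin n)) (j : Fin n) :
    Phi n x j = ⟨x (Sum.inl j), x (Sum.inr j)⟩ := rfl

lemma measurePreserving_Phi (n : ℕ) : MeasurePreserving (Phi n) volume volume := by
  have h1 := EuclideanSpace.volume_preserving_symm_measurableEquiv_toLp (Fin n ⊕ Fin n)
  have h2 := volume_measurePreserving_sumPiEquivProdPi (fun _ : Fin n ⊕ Fin n => ℝ)
  have h3 := (volume_measurePreserving_arrowProdEquivProdArrow ℝ ℝ (Fin n)).symm
    (MeasurableEquiv.arrowProdEquivProdArrow ℝ ℝ (Fin n))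
  have h4 := volume_preserving_pi fun _ : Fin n =>
    Complex.volume_preserving_equiv_real_prod.symm Complex.measurableEquivRealProd
  exact ((h4.comp h3).comp h2).comp h1

end ExpSqNormAux

open ExpSqNormAux in
theorem expected_sq_norm_log_gaussian_vec (n : ℕ) :
    ∫ v, (∑ j, ‖(v j : ℂ)‖ ^ 2)
        * Real.log (Real.sqrt (∑ j, ‖(v j : ℂ)‖ ^ 2)) ∂(stdCGaussianVec n)
      = n * digamma (n + 1) / 2 := by
  rcases Nat.eq_zero_or_pos n with rfl | hn
  · simp
  have hπ : (0 : ℝ) < Real.pi := Real.pi_pos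
  set S : (Fin n → ℂ) → ℝ := fun v => ∑ j, ‖v j‖ ^ 2 with hSdef
  have hS_nonneg : ∀ v, 0 ≤ S v := fun v =>
    Finset.sum_nonneg fun j _ => by positivity
  set f : ℝ → ℝ := fun r => Real.pi⁻¹ ^ n * Real.exp (-(r ^ 2)) * (r ^ 2 * Real.log r)
    with hfdef
  have hSmeas : Measurable S := by
    refine Finset.measurable_sum _ fun j _ => ?_
    exact (continuous_norm.measurable.comp (measurable_pi_apply j)).pow_const 2
  -- Step 1: turn the Gaussian integral into a Lebesgue integral
  have step1 : ∫ v, S v * Real.log (Real.sqrt (S v)) ∂(stdCGaussianVec n)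
      = ∫ v : Fin n → ℂ, f (Real.sqrt (S v)) := by
    rw [stdCGaussianVec_eq]
    have hmeas : Measurable fun v : Fin n → ℂ =>
        (Real.pi⁻¹ ^ n * Real.exp (-(S v))).toNNReal :=
      measurable_real_toNNReal.comp
        (measurable_const.mul (Real.measurable_exp.comp hSmeas.neg))
    rw [show (fun v : Fin n → ℂ =>
        ENNReal.ofReal (Real.pi⁻¹ ^ n * Real.exp (-(∑ j, ‖v j‖ ^ 2))))
      = fun v => (((Real.pi⁻¹ ^ n * Real.exp (-(S v))).toNNReal : ℝ≥0) : ℝ≥0∞) from rfl]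
    rw [integral_withDensity_eq_integral_smul hmeas]
    refine integral_congr_ae (Filter.Eventually.of_forall fun v => ?_)
    have h1 : Real.sqrt (S v) ^ 2 = S v := Real.sq_sqrt (hS_nonneg v)
    have h2 : (0 : ℝ) ≤ Real.pi⁻¹ ^ n * Real.exp (-(S v)) := by positivity
    simp only [NNReal.smul_def, Real.coe_toNNReal _ h2, smul_eq_mul, hfdef, h1]
  -- Step 2: transfer to Euclidean space
  have step2 : ∫ v : Fin n → ℂ, f (Real.sqrt (S v))
      = ∫ x : EuclideanSpace ℝ (Fin n ⊕ Fin n), f ‖x‖ := by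
    rw [← (measurePreserving_Phi n).integral_comp (Phi n).measurableEmbedding
      (fun v => f (Real.sqrt (S v)))]
    refine integral_congr_ae (Filter.Eventually.of_forall fun x => ?_)
    have hnorm : Real.sqrt (S (Phi n x)) = ‖x‖ := by
      have hsum : S (Phi n x) = ∑ i, x i ^ 2 := by
        simp only [hSdef, Phi_apply, Complex.sq_norm]
        rw [Fintype.sum_sum_type, ← Finset.sum_add_distrib]
        refine Finset.sum_congr rfl fun j _ => ?_
        simp [Complex.normSq_mk]
        ring
      rw [hsum, EuclideanSpace.norm_eq]
      congr 1
      refine Finset.sum_congr rfl fun i _ => ?_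
      rw [Real.norm_eq_abs, sq_abs]
    show f (Real.sqrt (S (Phi n x))) = f ‖x‖
    rw [hnorm]
  -- Step 3: polar coordinates
  haveI : Nonempty (Fin n ⊕ Fin n) := ⟨Sum.inl ⟨0, hn⟩⟩
  haveI : Nontrivial (EuclideanSpace ℝ (Fin n ⊕ Fin n)) := by
    refine nontrivial_of_ne (EuclideanSpace.single (Sum.inl ⟨0, hn⟩) 1) 0 ?_
    intro h
    have := congrFun (congrArg (fun y : EuclideanSpace ℝ (Fin n ⊕ Fin n) => (y : (Fin n ⊕ Fin n) → ℝ)) h) (Sum.inl ⟨0, hn⟩)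
    simp [EuclideanSpace.single_apply] at this
  have hdim : Module.finrank ℝ (EuclideanSpace ℝ (Fin n ⊕ Fin n)) = n + n := by
    rw [finrank_euclideanSpace, Fintype.card_sum, Fintype.card_fin]
  have step3 := integral_fun_norm_addHaar
    (volume : Measure (EuclideanSpace ℝ (Fin n ⊕ Fin n))) f
  rw [hdim] at step3
  -- ball volume
  have hΓpos : 0 < Real.Gamma ((n : ℝ) + 1) := Real.Gamma_pos_of_pos (by positivity)
  have hball : (volume (Metric.ball (0 : EuclideanSpace ℝ (Fin n ⊕ Fin n)) 1)).toReal
      = Real.pi ^ n / Real.Gamma ((n : ℝ) + 1) := by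
    rw [EuclideanSpace.volume_ball]
    have hcard : Fintype.card (Fin n ⊕ Fin n) = n + n := by
      rw [Fintype.card_sum, Fintype.card_fin]
    rw [hcard]
    have h1 : Real.sqrt Real.pi ^ (n + n) = Real.pi ^ n := by
      rw [← two_mul, pow_mul, Real.sq_sqrt hπ.le]
    have h2 : ((n + n : ℕ) : ℝ) / 2 + 1 = (n : ℝ) + 1 := by push_cast; ring
    rw [h1, h2, ENNReal.ofReal_one, one_pow, one_mul,
      ENNReal.toReal_ofReal (by positivity)]
  -- the radial integral
  have hIoi : (∫ y in Ioi (0 : ℝ), y ^ (n + n - 1) • f y)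
      = Real.pi⁻¹ ^ n * ((1 / 4) * deriv Real.Gamma ((n : ℝ) + 1)) := by
    have key : ∀ y ∈ Ioi (0 : ℝ), y ^ (n + n - 1) • f y
        = (|(2 : ℝ)| * y ^ ((2 : ℝ) - 1)) •
            (fun s => Real.pi⁻¹ ^ n * ((1 / 4) * (s ^ n * Real.exp (-s) * Real.log s)))
              (y ^ (2 : ℝ)) := by
      intro y hy
      have hy0 : (0 : ℝ) < y := hy
      have hr2 : y ^ (2 : ℝ) = y ^ 2 := by
        rw [show (2 : ℝ) = ((2 : ℕ) : ℝ) by norm_num, Real.rpow_natCast]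
      have hr1 : y ^ ((2 : ℝ) - 1) = y := by
        norm_num
      simp only [smul_eq_mul, hr2, hr1, hfdef]
      rw [Real.log_pow, ← pow_mul]
      have e1 : y ^ (n + n - 1) * y ^ 2 = y ^ (n + n + 1) := by
        rw [← pow_add]; congr 1; omega
      have e2 : y * y ^ (2 * n) = y ^ (n + n + 1) := by
        rw [← pow_succ']; congr 1; omega
      calc y ^ (n + n - 1) * (Real.pi⁻¹ ^ n * Real.exp (-y ^ 2) * (y ^ 2 * Real.log y))
          = Real.pi⁻¹ ^ n * Real.exp (-y ^ 2) * Real.log y * (y ^ (n + n - 1) * y ^ 2) := by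
            ring
        _ = Real.pi⁻¹ ^ n * Real.exp (-y ^ 2) * Real.log y * (y * y ^ (2 * n)) := by
            rw [e1, e2]
        _ = |(2 : ℝ)| * y *
              (Real.pi⁻¹ ^ n * (1 / 4 * (y ^ (2 * n) * Real.exp (-y ^ 2) * (((2 : ℕ) : ℝ) * Real.log y)))) := by
            rw [abs_of_nonneg (by norm_num : (0:ℝ) ≤ 2)]
            push_cast
            ring
    have sub1 : (∫ y in Ioi (0 : ℝ), y ^ (n + n - 1) • f y)
        = ∫ y in Ioi (0 : ℝ), (|(2 : ℝ)| * y ^ ((2 : ℝ) - 1)) •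
            (fun s => Real.pi⁻¹ ^ n * ((1 / 4) * (s ^ n * Real.exp (-s) * Real.log s)))
              (y ^ (2 : ℝ)) :=
      setIntegral_congr_fun measurableSet_Ioi key
    have sub2 := integral_comp_rpow_Ioi
      (fun s => Real.pi⁻¹ ^ n * ((1 / 4) * (s ^ n * Real.exp (-s) * Real.log s)))
      (p := 2) two_ne_zero
    rw [sub1, sub2]
    simp only [integral_const_mul]
    have hG := (hasDerivAt_Gamma_real (x := (n : ℝ) + 1) (by positivity)).deriv
    rw [hG]
    congr 1
    congr 1
    refine setIntegral_congr_fun measurableSet_Ioi fun t ht => ?_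
    have ht0 : (0 : ℝ) < t := ht
    have : (t : ℝ) ^ ((n : ℝ) + 1 - 1) = t ^ n := by
      rw [add_sub_cancel_right, Real.rpow_natCast]
    rw [this]
    ring
  -- put everything together
  rw [step1, step2, step3, measureReal_def, hball, hIoi]
  simp only [nsmul_eq_mul, smul_eq_mul, digamma]
  have hpin : Real.pi ^ n * Real.pi⁻¹ ^ n = 1 := by
    rw [← mul_pow, mul_inv_cancel₀ hπ.ne', one_pow]
  push_cast
  field_simp
  ring_nf
  rw [hpin]
  ring
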